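/- arXiv:2509.25432 — 2 statements merged into one kernel-verified Lean document; each statement's English description precedes it below -/
import Mathlib

section
/- Let $k$ be an algebraically closed field and let $n \geq 0$ be an integer. Let $v_0, \dots, v_{n+1} \in k^3$ be nonzero vectors that are pairwise linearly independent, and suppose they all lie in a common $2$-dimensional linear subspace of $k^3$ (i.e., the corresponding $n+2$ distinct points of $\mathbb{P}^2_k$ are collinear). Then the evaluation map from the space of homogeneous polynomials of degree $n$ in $k[X_0, X_1, X_2]$ to $k^{n+2}$, sending $F \mapsto (F(v_0), \dots, F(v_{n+1}))$, is not surjective. -/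
open MvPolynomial Submodule

/-- `n+2` distinct collinear points of `ℙ²` over an algebraically closed field fail to impose
independent conditions on curves of degree `n`: the evaluation map from degree-`n` homogeneous
polynomials in `k[X₀,X₁,X₂]` to `k^{n+2}` is not surjective. -/
theorem collinear_points_fail_independent_conditions
    (k : Type*) [Field k] [IsAlgClosed k] (n : ℕ)
    (v : Fin (n + 2) → (Fin 3 → k))
    (hv : ∀ i, v i ≠ 0)
    (hind : ∀ i j, i ≠ j → LinearIndependent k ![v i, v j])
    (hcol : ∃ W : Submodule k (Fin 3 → k), Module.finrank k W = 2 ∧ ∀ i, v i ∈ W) :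
    ¬ Function.Surjective
      (fun F : MvPolynomial.homogeneousSubmodule (Fin 3) k n =>
        fun i : Fin (n + 2) => MvPolynomial.eval (v i) (F : MvPolynomial (Fin 3) k)) := by
  classical
  obtain ⟨W, hW2, hWv⟩ := hcol
  -- choose a basis of the plane W
  let B : Module.Basis (Fin 2) k W := Module.finBasisOfFinrankEq k W hW2
  set a : Fin 3 → k := (B 0 : Fin 3 → k) with ha
  set b : Fin 3 → k := (B 1 : Fin 3 → k) with hb
  set c : Fin (n + 2) → k := fun i => B.repr ⟨v i, hWv i⟩ 0 with hc
  set d : Fin (n + 2) → k := fun i => B.repr ⟨v i, hWv i⟩ 1 with hd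
  have hvi : ∀ i, v i = c i • a + d i • b := by
    intro i
    have := B.sum_repr ⟨v i, hWv i⟩
    have h2 : (c i) • (B 0) + (d i) • (B 1) = (⟨v i, hWv i⟩ : W) := by
      rw [← this, Fin.sum_univ_two]
    have h3 : v i = ((c i • B 0 + d i • B 1 : W) : Fin 3 → k) := by rw [h2]
    rw [Submodule.coe_add, SetLike.val_smul, SetLike.val_smul] at h3
    exact h3
  -- the (n+1) generating vectors
  set w : Fin (n + 1) → (Fin (n + 2) → k) :=
    fun j i => c i ^ (j : ℕ) * d i ^ (n - (j : ℕ)) with hw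
  -- key: every value of the evaluation map lies in the span of the `w j`
  have key : ∀ F : MvPolynomial (Fin 3) k, F.IsHomogeneous n →
      (fun i : Fin (n + 2) => MvPolynomial.eval (v i) F) ∈
        Submodule.span k (Set.range w) := by
    intro F hF
    -- substitute the parametrization of the line
    set g : Fin 3 → MvPolynomial (Fin 2) k :=
      fun s => C (a s) * X 0 + C (b s) * X 1 with hg
    set G : MvPolynomial (Fin 2) k := aeval g F with hG
    have hGhom : G.IsHomogeneous n := by
      have := hF.aeval g (n := 1) (fun s => by
        apply MvPolynomial.IsHomogeneous.add
        · exact (isHomogeneous_X k (0 : Fin 2)).C_mul _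
        · exact (isHomogeneous_X k (1 : Fin 2)).C_mul _)
      simpa [hG] using this
    have heval : ∀ i, MvPolynomial.eval (v i) F = MvPolynomial.eval ![c i, d i] G := by
      intro i
      have comp := MvPolynomial.comp_aeval (f := g) (φ := aeval (R := k) ![c i, d i])
      have := congrArg (fun ψ : MvPolynomial (Fin 3) k →ₐ[k] k => ψ F) comp
      simp only [AlgHom.comp_apply] at this
      have hsub : (fun s => aeval (R := k) ![c i, d i] (g s)) = v i := by
        funext s
        simp [hg, hvi i, Matrix.cons_val_zero, Matrix.cons_val_one]
        ring
      have e1 : ∀ (p : MvPolynomial (Fin 2) k), aeval ![c i, d i] p = eval ![c i, d i] p := by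
        intro p; rw [aeval_def, Algebra.algebraMap_self]; rfl
      have e2 : ∀ (p : MvPolynomial (Fin 3) k), aeval (v i) p = eval (v i) p := by
        intro p; rw [aeval_def, Algebra.algebraMap_self]; rfl
      calc eval (v i) F = aeval (v i) F := (e2 F).symm
        _ = aeval (fun s => aeval ![c i, d i] (g s)) F := by rw [hsub]
        _ = aeval ![c i, d i] (aeval g F) := this.symm
        _ = eval ![c i, d i] G := by rw [← hG]; exact e1 G
    -- expand G as a binary form
    have hdeg : ∀ m ∈ G.support, (m 0 : ℕ) + m 1 = n := by
      intro m hm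
      have hne : Finsupp.degree m = n := by
        by_contra h
        exact (MvPolynomial.mem_support_iff.mp hm) (hGhom.coeff_eq_zero h)
      rw [← hne, Finsupp.degree_apply]
      rw [Finset.sum_subset (Finset.subset_univ m.support)
        (fun x _ hx => Finsupp.notMem_support_iff.mp hx), Fin.sum_univ_two]
    have expand : (fun i : Fin (n + 2) => MvPolynomial.eval (v i) F) =
        ∑ m ∈ G.support.attach,
          (MvPolynomial.coeff m.1 G) •
            w ⟨m.1 0, by have := hdeg m.1 m.2; omega⟩ := by
      funext i
      rw [heval i, MvPolynomial.eval_eq', Finset.sum_apply,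
        ← Finset.sum_attach G.support
          (fun m => MvPolynomial.coeff m G * ∏ s, (![c i, d i]) s ^ m s)]
      apply Finset.sum_congr rfl
      intro m _
      have hm := hdeg m.1 m.2
      simp only [Pi.smul_apply, smul_eq_mul, hw, Fin.prod_univ_two,
        Matrix.cons_val_zero, Matrix.cons_val_one, Matrix.head_cons]
      have hx : (m.1 1 : ℕ) = n - m.1 0 := by omega
      rw [hx]
    rw [expand]
    exact Submodule.sum_mem _ fun m _ =>
      Submodule.smul_mem _ _ (Submodule.subset_span ⟨_, rfl⟩)
  intro hsurj
  have hspan : Submodule.span k (Set.range w) = ⊤ := by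
    rw [eq_top_iff]
    rintro y -
    obtain ⟨F, hF⟩ := hsurj y
    rw [← hF]
    exact key F F.2
  haveI : Fintype ↥(Set.range w) := Set.fintypeRange w
  have h1 : Module.finrank k (Fin (n + 2) → k) ≤ n + 1 := by
    calc Module.finrank k (Fin (n + 2) → k) = Module.finrank k (⊤ : Submodule k (Fin (n+2) → k)) :=
          (finrank_top k _).symm
      _ = Module.finrank k (Submodule.span k (Set.range w)) := by rw [hspan]
      _ ≤ (Set.range w).toFinset.card := finrank_span_le_card _
      _ ≤ n + 1 := by
          rw [Set.toFinset_range]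
          exact (Finset.card_image_le).trans (by simp)
  rw [Module.finrank_pi] at h1
  simp at h1
end

section
/- Let $k$ be an algebraically closed field and let $n \geq 0$ be an integer. Let $v_0, \dots, v_{n+1} \in k^3$ be nonzero vectors that are pairwise linearly independent and not all contained in a common $2$-dimensional linear subspace of $k^3$. Then there exist an index $j$ and a homogeneous polynomial $F \in k[X_0, X_1, X_2]$ of degree $n$ such that $F(v_i) = 0$ for all $i \neq j$ and $F(v_j) \neq 0$. In other words, given $n+2$ distinct non-collinear points of $\mathbb{P}^2_k$, there is a plane curve of degree $n$ passing through all but one of these points and missing the remaining point. -/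
open MvPolynomial Module

/-- Linear form attached to a dual vector. -/
noncomputable def dualPoly {k : Type*} [Field k] (φ : Module.Dual k (Fin 3 → k)) :
    MvPolynomial (Fin 3) k :=
  ∑ s, MvPolynomial.C (φ (Pi.single s 1)) * MvPolynomial.X s

lemma dualPoly_eval {k : Type*} [Field k] (φ : Module.Dual k (Fin 3 → k)) (w : Fin 3 → k) :
    MvPolynomial.eval w (dualPoly φ) = φ w := by
  have hw : w = ∑ s, w s • (Pi.single s 1 : Fin 3 → k) := by
    funext j
    simp [Finset.sum_apply, Pi.single_apply, eq_comm]
  conv_rhs => rw [hw]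
  simp [dualPoly, map_sum, mul_comm]

lemma dualPoly_homog {k : Type*} [Field k] (φ : Module.Dual k (Fin 3 → k)) :
    (dualPoly φ).IsHomogeneous 1 := by
  apply MvPolynomial.IsHomogeneous.sum
  intro s _
  simpa using (MvPolynomial.isHomogeneous_C _ _).mul (MvPolynomial.isHomogeneous_X k s)

/-- Given `n+2` distinct non-collinear points of `ℙ²` over an algebraically closed field,
there is a plane curve of degree `n` passing through all but one of the points and missing
the remaining one. -/
theorem exists_curve_through_all_but_one
    (k : Type*) [Field k] [IsAlgClosed k] (n : ℕ)
    (v : Fin (n + 2) → (Fin 3 → k))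
    (hv : ∀ i, v i ≠ 0)
    (hind : ∀ i j, i ≠ j → LinearIndependent k ![v i, v j])
    (hncol : ¬ ∃ W : Submodule k (Fin 3 → k), Module.finrank k W = 2 ∧ ∀ i, v i ∈ W) :
    ∃ (j : Fin (n + 2)) (F : MvPolynomial (Fin 3) k), F.IsHomogeneous n ∧
      (∀ i, i ≠ j → MvPolynomial.eval (v i) F = 0) ∧ MvPolynomial.eval (v j) F ≠ 0 := by
  classical
  set a : Fin (n+2) := 0 with ha
  set b : Fin (n+2) := 1 with hb
  have hab : a ≠ b := by simp [ha, hb]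
  set W : Submodule k (Fin 3 → k) := Submodule.span k (Set.range ![v a, v b]) with hW
  have hWrank : Module.finrank k W = 2 := by
    rw [hW, finrank_span_eq_card (hind a b hab)]
    simp
  have hmemW : v a ∈ W ∧ v b ∈ W :=
    ⟨Submodule.subset_span ⟨0, rfl⟩, Submodule.subset_span ⟨1, rfl⟩⟩
  obtain ⟨j, hj⟩ : ∃ j, v j ∉ W := by
    by_contra h
    push_neg at h
    exact hncol ⟨W, hWrank, h⟩
  have hja : j ≠ a := fun h => hj (h ▸ hmemW.1)
  have hjb : j ≠ b := fun h => hj (h ▸ hmemW.2)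
  rcases Nat.eq_zero_or_pos n with hn | hn
  · exfalso
    subst hn
    have h0 : j.val ≠ 0 := fun h => hja (Fin.ext h)
    have h1 : j.val ≠ 1 := fun h => hjb (Fin.ext h)
    have := j.isLt
    omega
  -- linear form killing v a, v b but not v j
  obtain ⟨g, hg, hgW⟩ := W.exists_dual_map_eq_bot_of_notMem hj inferInstance
  have hgW' : ∀ w ∈ W, g w = 0 := fun w hw => by
    have : g w ∈ W.map g := ⟨w, hw, rfl⟩
    rw [hgW] at this; exact (Submodule.mem_bot k).1 this
  -- linear forms killing v i but not v j, for i ≠ j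
  have hf : ∀ i : Fin (n+2), ∃ f : Module.Dual k (Fin 3 → k),
      i ≠ j → f (v j) ≠ 0 ∧ f (v i) = 0 := by
    intro i
    rcases eq_or_ne i j with rfl | hi
    · exact ⟨0, fun h => absurd rfl h⟩
    have hnm : v j ∉ Submodule.span k {v i} := by
      intro hm
      obtain ⟨c, hc⟩ := Submodule.mem_span_singleton.1 hm
      have h2 := hind j i (fun h => hi h.symm)
      rw [LinearIndependent.pair_iff] at h2
      have := (h2 1 (-c) (by rw [one_smul, neg_smul, ← hc]; abel)).1
      simp at this
    obtain ⟨f, hf1, hf2⟩ :=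
      (Submodule.span k {v i}).exists_dual_map_eq_bot_of_notMem hnm inferInstance
    refine ⟨f, fun _ => ⟨hf1, ?_⟩⟩
    have : f (v i) ∈ (Submodule.span k {v i}).map f :=
      ⟨v i, Submodule.subset_span rfl, rfl⟩
    rw [hf2] at this; exact (Submodule.mem_bot k).1 this
  choose f hfp using hf
  set S : Finset (Fin (n+2)) := Finset.univ \ {a, b, j} with hS
  have hScard : S.card = n - 1 := by
    rw [hS, Finset.card_sdiff_of_subset (by simp)]
    have h3 : ({a, b, j} : Finset (Fin (n+2))).card = 3 := by
      rw [Finset.card_insert_of_notMem (by simp [hab, hja.symm]),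
        Finset.card_insert_of_notMem (by simp [hjb.symm])]
      simp
    rw [h3]
    simp
  have hSj : ∀ i ∈ S, i ≠ j := by
    intro i hi
    rw [hS, Finset.mem_sdiff] at hi
    simp at hi
    exact hi.2.2
  refine ⟨j, dualPoly g * ∏ i ∈ S, dualPoly (f i), ?_, ?_, ?_⟩
  · have hprod : (∏ i ∈ S, dualPoly (f i)).IsHomogeneous (n - 1) := by
      have h := MvPolynomial.IsHomogeneous.prod S (fun i => dualPoly (f i))
        (fun _ => 1) (fun i _ => dualPoly_homog (f i))
      simpa [hScard] using h
    have := (dualPoly_homog g).mul hprod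
    rwa [show 1 + (n - 1) = n by omega] at this
  · intro i hi
    rw [map_mul]
    by_cases hiab : i = a ∨ i = b
    · have : MvPolynomial.eval (v i) (dualPoly g) = 0 := by
        rw [dualPoly_eval]
        rcases hiab with rfl | rfl
        exacts [hgW' _ hmemW.1, hgW' _ hmemW.2]
      rw [this, zero_mul]
    · push_neg at hiab
      have hiS : i ∈ S := by
        rw [hS, Finset.mem_sdiff]
        simp [hiab.1, hiab.2, hi]
      rw [map_prod, Finset.prod_eq_zero hiS (by rw [dualPoly_eval]; exact (hfp i hi).2),
        mul_zero]
  · rw [map_mul, map_prod]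
    apply mul_ne_zero
    · rwa [dualPoly_eval]
    · apply Finset.prod_ne_zero_iff.2
      intro i hi
      rw [dualPoly_eval]
      exact (hfp i (hSj i hi)).1
end
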